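/- Let k ≥ 2 be an integer and let π be the PageRank vector of Γ(k) for α = 1 − 1/k. Then the squared Euclidean norm of π satisfies ‖π‖₂² < π_{C1}² + (9/8)·π_{C2}² + 3/(2(k+3)) + 9/(4k(k+3)²) + π_A². -/

import Mathlib

/-- Arc relation of the graph `Γ(k)` on vertex indices `0, ..., k+2`, where
vertex `0` is `C1`, vertex `1` is `C2`, vertex `i+1` is `B_i` for `1 ≤ i ≤ k`,
and vertex `k+2` is `A`.  `PRadj k j i` holds iff there is an arc from `j` to `i`. -/
def PRadj (k j i : ℕ) : Prop :=
  (j = 0 ∧ (i = 0 ∨ i = 1)) ∨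
  (j = 1 ∧ (i = 0 ∨ i = 1 ∨ i = 2)) ∨
  (2 ≤ j ∧ j ≤ k + 1 ∧ (i = 0 ∨ i = 1 ∨ i = j + 1)) ∨
  (j = k + 2 ∧ i = k + 2)

instance (k j i : ℕ) : Decidable (PRadj k j i) := by unfold PRadj; infer_instance

/-- Out-degree of vertex `j` in `Γ(k)`:  `deg(C1) = 2`, `deg(A) = 1`, all others `3`. -/
def PRdeg (k j : ℕ) : ℕ := if j = 0 then 2 else if j = k + 2 then 1 else 3

/-- The PageRank matrix `R_α` of `Γ(k)`:  entry `(i, j)` is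
`α / deg(j) + (1 - α)/(k+3)` if there is an arc from `j` to `i`, and `(1 - α)/(k+3)`
otherwise. -/
noncomputable def PRmat (k : ℕ) (α : ℝ) : Matrix (Fin (k + 3)) (Fin (k + 3)) ℝ :=
  fun i j =>
    if PRadj k j.1 i.1 then α / (PRdeg k j.1 : ℝ) + (1 - α) / ((k : ℝ) + 3)
    else (1 - α) / ((k : ℝ) + 3)

/-- `π` is a PageRank vector of `Γ(k)` for jumping parameter `α`:  it has nonnegative
entries summing to `1` and satisfies `R_α π = π`. -/
def IsPageRank (k : ℕ) (α : ℝ) (π : Fin (k + 3) → ℝ) : Prop :=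
  (∀ v, 0 ≤ π v) ∧ (∑ v, π v = 1) ∧ (PRmat k α).mulVec π = π


lemma geo_aux (r : ℝ) (h0 : 0 ≤ r) (h1 : r < 1) (n : ℕ) :
    ∑ j ∈ Finset.range n, r ^ (j + 1) ≤ r / (1 - r) := by
  have h2 : (0:ℝ) < 1 - r := by linarith
  have hrw : ∑ j ∈ Finset.range n, r ^ (j+1) = r * ∑ j ∈ Finset.range n, r ^ j := by
    rw [Finset.mul_sum]
    exact Finset.sum_congr rfl fun j _ => by ring
  rw [hrw, geom_sum_eq (ne_of_lt h1)]
  rw [show r ^ n - 1 = -(1 - r^n) by ring, show r - 1 = -(1-r) by ring, neg_div_neg_eq]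
  rw [mul_div_assoc', div_le_div_iff₀ h2 h2]
  have hrn : 0 ≤ r ^ n := pow_nonneg h0 n
  nlinarith [mul_nonneg (mul_nonneg h0 hrn) h2.le]

set_option maxHeartbeats 1000000 in
/-- For `k ≥ 2` and `α = 1 - 1/k`, the PageRank vector satisfies
`‖π‖₂² < π_{C1}² + (9/8)·π_{C2}² + 3/(2(k+3)) + 9/(4k(k+3)²) + π_A²`. -/
theorem pagerank_sq_norm_upper_bound (k : ℕ) (hk : 2 ≤ k) (π : Fin (k + 3) → ℝ)
    (hπ : IsPageRank k (1 - 1 / (k : ℝ)) π) :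
    (∑ v, π v ^ 2) <
      π ⟨0, by omega⟩ ^ 2 + (9 / 8) * π ⟨1, by omega⟩ ^ 2
        + 3 / (2 * ((k : ℝ) + 3)) + 9 / (4 * (k : ℝ) * ((k : ℝ) + 3) ^ 2)
        + π ⟨k + 2, by omega⟩ ^ 2 := by
  obtain ⟨hpos, hsum, heig⟩ := hπ
  have hk2 : (2:ℝ) ≤ (k:ℝ) := by exact_mod_cast hk
  have hk0 : (0:ℝ) < k := by linarith
  have hkne : (k:ℝ) ≠ 0 := ne_of_gt hk0
  have hk3 : (0:ℝ) < (k:ℝ) + 3 := by linarith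
  have hk3ne : (k:ℝ) + 3 ≠ 0 := ne_of_gt hk3
  set α : ℝ := 1 - 1/(k:ℝ) with hαdef
  set β : ℝ := α/3 with hβdef
  set c : ℝ := (1 - α)/((k:ℝ)+3) with hcdef
  set t : ℝ := (3/2) * c with htdef
  set x : ℝ := π ⟨1, by omega⟩ with hxdef
  clear_value x t c β α
  have hαval : 1 - α = 1/(k:ℝ) := by rw [hαdef]; ring
  have hik : 1/(k:ℝ) ≤ 1/2 := by
    rw [div_le_div_iff₀ hk0 (by norm_num)]; linarith
  have hik0 : 0 < 1/(k:ℝ) := by positivity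
  have hβ0 : 0 ≤ β := by rw [hβdef, hαdef]; linarith
  have hβlt : β < 1/3 := by rw [hβdef, hαdef]; nlinarith
  have hc0 : 0 ≤ c := by rw [hcdef, hαval]; positivity
  have hcval : c = 1/((k:ℝ)*((k:ℝ)+3)) := by
    rw [hcdef, hαval]; field_simp
  have ht0 : 0 ≤ t := by rw [htdef]; linarith
  have htval : t = 3/(2*(k:ℝ)*((k:ℝ)+3)) := by
    rw [htdef, hcval]; field_simp
  -- recurrence along the chain C2 → B1 → B2 → ⋯ → Bk
  have hrec : ∀ m : ℕ, ∀ _ : 1 ≤ m, ∀ _ : m ≤ k,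
      π ⟨m+1, by omega⟩ = β * π ⟨m, by omega⟩ + c := by
    intro m hm1 hmk
    have h := congr_fun heig ⟨m+1, by omega⟩
    simp only [Matrix.mulVec, dotProduct] at h
    have hentry : ∀ j : Fin (k+3), PRmat k α ⟨m+1, by omega⟩ j
        = (if j = (⟨m, by omega⟩ : Fin (k+3)) then β else 0) + c := by
      intro j
      unfold PRmat
      by_cases hj : j = (⟨m, by omega⟩ : Fin (k+3))
      · subst hj
        rw [if_pos (show PRadj k m (m+1) by unfold PRadj; omega), if_pos rfl]
        have hdeg : PRdeg k m = 3 := by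
          unfold PRdeg; rw [if_neg (by omega), if_neg (by omega)]
        rw [hdeg, hβdef, hcdef]; norm_num
      · have hj1 : (j : ℕ) ≠ m := fun h => hj (Fin.ext h)
        have hjlt : (j:ℕ) < k + 3 := j.2
        rw [if_neg (show ¬ PRadj k (j:ℕ) (m+1) by unfold PRadj; omega), if_neg hj, hcdef]
        ring
    simp only [hentry] at h
    have hsplitif : ∀ j : Fin (k+3),
        ((if j = (⟨m, by omega⟩ : Fin (k+3)) then β else 0) + c) * π j
        = (if j = (⟨m, by omega⟩ : Fin (k+3)) then β * π j else 0) + c * π j := by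
      intro j
      by_cases hj : j = (⟨m, by omega⟩ : Fin (k+3))
      · rw [if_pos hj, if_pos hj]; ring
      · rw [if_neg hj, if_neg hj]; ring
    simp only [hsplitif] at h
    rw [Finset.sum_add_distrib] at h
    simp only [Finset.sum_ite_eq', Finset.mem_univ, if_true, ← Finset.mul_sum, hsum,
      mul_one] at h
    exact h.symm
  have hx0 : 0 ≤ x := by rw [hxdef]; exact hpos _
  have hx1 : x ≤ 1 := by
    rw [hxdef, ← hsum]
    exact Finset.single_le_sum (fun v _ => hpos v) (Finset.mem_univ _)
  -- pointwise bound on the B-chain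
  have hbnd : ∀ m : ℕ, ∀ _ : 1 ≤ m, ∀ _ : m ≤ k,
      π ⟨m+1, by omega⟩ ≤ β^m * x + t := by
    intro m
    induction m with
    | zero => intro h _; exact absurd h (by omega)
    | succ n ih =>
      intro _ hmk
      rcases Nat.eq_zero_or_pos n with hn | hn
      · subst hn
        rw [hrec 1 le_rfl (by omega)]
        have he : π ⟨1, by omega⟩ = x := hxdef.symm
        have hct : c ≤ t := by rw [htdef]; linarith
        have hp : β^(0+1) = β := by norm_num
        rw [he, hp]
        linarith
      · have hb := ih hn (by omega)
        rw [hrec (n+1) (by omega) hmk]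
        have h1 : β * π ⟨n+1, by omega⟩ ≤ β * (β^n * x + t) :=
          mul_le_mul_of_nonneg_left hb hβ0
        have hdist : β * (β^n * x + t) = β^(n+1) * x + β * t := by ring
        have hbt : β * t + c ≤ t := by
          rw [htdef]
          nlinarith [mul_nonneg hc0 (by linarith : (0:ℝ) ≤ 1 - 3*β)]
        linarith
  -- decompose the sum of squares
  set g : ℕ → ℝ := fun i => if h : i < k+3 then π ⟨i, h⟩^2 else 0 with hgdef
  have hgv : ∀ v : Fin (k+3), π v ^ 2 = g v.1 := by
    intro v; simp only [hgdef]; rw [dif_pos v.2]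
  have hstep1 : ∑ v, π v ^ 2 = ∑ i ∈ Finset.range (k+3), g i := by
    rw [Finset.sum_congr rfl fun v _ => hgv v]
    exact Fin.sum_univ_eq_sum_range g (k+3)
  have hsplit2 : ∑ i ∈ Finset.range (k+3), g i
      = g 0 + g 1 + (∑ i ∈ Finset.Ico 2 (k+2), g i) + g (k+2) := by
    rw [show k+3 = (k+2)+1 from rfl, Finset.sum_range_succ]
    congr 1
    rw [Finset.range_eq_Ico,
      ← Finset.sum_Ico_consecutive g (show 0 ≤ 2 by omega) (show 2 ≤ k+2 by omega)]
    congr 1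
    rw [show Finset.Ico 0 2 = Finset.range 2 by rw [Finset.range_eq_Ico]]
    rw [Finset.sum_range_succ, Finset.sum_range_one]
  -- bound the middle sum termwise
  have hmid : ∑ i ∈ Finset.Ico 2 (k+2), g i
      ≤ ∑ j ∈ Finset.range k, (β^(j+1) * x + t)^2 := by
    rw [Finset.sum_Ico_eq_sum_range, show k+2-2 = k from rfl]
    apply Finset.sum_le_sum
    intro j hj
    have hjk : j < k := Finset.mem_range.mp hj
    have h1 := hbnd (j+1) (by omega) (by omega)
    calc g (2+j) = π ⟨2+j, by omega⟩^2 := by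
          simp only [hgdef]; rw [dif_pos (show 2+j < k+3 by omega)]
      _ = π ⟨j+1+1, by omega⟩^2 := by
          have he : (⟨2+j, by omega⟩ : Fin (k+3)) = ⟨j+1+1, by omega⟩ :=
            Fin.ext (show 2+j = j+1+1 by omega)
          rw [he]
      _ ≤ (β^(j+1) * x + t)^2 := pow_le_pow_left₀ (hpos _) h1 2
  have hterm : ∀ j : ℕ, (β^(j+1)*x+t)^2
      = (β^2)^(j+1)*x^2 + 2*t*x*β^(j+1) + t^2 := by
    intro j
    rw [← pow_mul]
    ring
  have hexp : ∑ j ∈ Finset.range k, (β^(j+1) * x + t)^2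
      = (∑ j ∈ Finset.range k, (β^2)^(j+1)) * x^2
        + 2*t*x*(∑ j ∈ Finset.range k, β^(j+1)) + (k:ℝ) * t^2 := by
    rw [Finset.sum_congr rfl fun j _ => hterm j]
    rw [Finset.sum_add_distrib, Finset.sum_add_distrib, ← Finset.sum_mul,
      ← Finset.mul_sum, Finset.sum_const, Finset.card_range, nsmul_eq_mul]
  have hgeo1 : ∑ j ∈ Finset.range k, β^(j+1) ≤ 1/2 := by
    have h := geo_aux β hβ0 (by linarith) k
    have h2 : β/(1-β) ≤ 1/2 := by
      rw [div_le_div_iff₀ (by linarith) (by norm_num)]; linarith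
    linarith
  have hgeo2 : ∑ j ∈ Finset.range k, (β^2)^(j+1) ≤ 1/8 := by
    have hb2 : β^2 < 1 := by nlinarith
    have h := geo_aux (β^2) (sq_nonneg β) hb2 k
    have h2 : β^2/(1-β^2) ≤ 1/8 := by
      rw [div_le_div_iff₀ (by nlinarith) (by norm_num)]; nlinarith
    linarith
  have hmid2 : ∑ i ∈ Finset.Ico 2 (k+2), g i ≤ (1/8)*x^2 + t + (k:ℝ)*t^2 := by
    have e1 : (∑ j ∈ Finset.range k, (β^2)^(j+1)) * x^2 ≤ (1/8)*x^2 :=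
      mul_le_mul_of_nonneg_right hgeo2 (sq_nonneg x)
    have e2 : 2*t*x*(∑ j ∈ Finset.range k, β^(j+1)) ≤ t := by
      have h1 : 0 ≤ t*x := mul_nonneg ht0 hx0
      nlinarith [mul_nonneg h1 (sub_nonneg.mpr hgeo1),
        mul_nonneg ht0 (sub_nonneg.mpr hx1)]
    calc ∑ i ∈ Finset.Ico 2 (k+2), g i
        ≤ ∑ j ∈ Finset.range k, (β^(j+1) * x + t)^2 := hmid
      _ = _ := hexp
      _ ≤ (1/8)*x^2 + t + (k:ℝ)*t^2 := by linarith
  have htlt : t < 3/(2*((k:ℝ)+3)) := by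
    rw [htval, div_lt_div_iff₀ (by positivity) (by positivity)]
    nlinarith [mul_pos hk3 (show (0:ℝ) < (k:ℝ) - 1 by linarith)]
  have hktval : (k:ℝ)*t^2 = 9/(4*(k:ℝ)*((k:ℝ)+3)^2) := by
    rw [htval]; field_simp; ring
  have hg0 : g 0 = π ⟨0, by omega⟩^2 := by
    simp only [hgdef]; rw [dif_pos (show 0 < k+3 by omega)]
  have hg1 : g 1 = x^2 := by
    simp only [hgdef]; rw [dif_pos (show 1 < k+3 by omega), hxdef]
  have hgk2 : g (k+2) = π ⟨k+2, by omega⟩^2 := by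
    simp only [hgdef]; rw [dif_pos (show k+2 < k+3 by omega)]
  rw [hstep1, hsplit2, hg0, hg1, hgk2]
  have h98 : (9:ℝ)/8 * x^2 = x^2 + (1/8)*x^2 := by ring
  linarith
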